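/- For α, β, γ ∈ (0,1), the function h(v) = v + (((1+v^{1/α})^α − v)^{1/γ} + ((1+v^{1/β})^β − v)^{1/γ})^γ is strictly convex on (0,∞), i.e., h''(v) > 0 for all v > 0. -/

import Mathlib

open Real Set

noncomputable def gA (a v : ℝ) : ℝ := (1 + v ^ (1/a)) ^ a - v
noncomputable def gA1 (a v : ℝ) : ℝ := (1 + v ^ (1/a)) ^ (a-1) * v ^ (1/a - 1) - 1
noncomputable def gA2 (a v : ℝ) : ℝ := (1/a - 1) * v ^ (1/a - 2) * (1 + v ^ (1/a)) ^ (a-2)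

lemma base_pos {a v : ℝ} (hv : 0 < v) : 0 < 1 + v ^ (1/a) := by positivity

lemma gA_pos {a v : ℝ} (ha : a ∈ Set.Ioo (0:ℝ) 1) (hv : 0 < v) : 0 < gA a v := by
  have h1 : v ^ (1/a) < 1 + v ^ (1/a) := by linarith [Real.rpow_pos_of_pos hv (1/a)]
  have h2 : (v ^ (1/a)) ^ a < (1 + v ^ (1/a)) ^ a :=
    Real.rpow_lt_rpow (Real.rpow_pos_of_pos hv (1/a)).le h1 ha.1
  have h3 : (v ^ (1/a)) ^ a = v := by
    rw [← Real.rpow_mul hv.le, one_div_mul_cancel ha.1.ne', Real.rpow_one]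
  rw [gA]; linarith [h3 ▸ h2]

lemma gA2_pos {a v : ℝ} (ha : a ∈ Set.Ioo (0:ℝ) 1) (hv : 0 < v) : 0 < gA2 a v := by
  have h1 : (1:ℝ) < 1/a := one_lt_one_div ha.1 ha.2
  have h2 : 0 < 1 + v ^ (1/a) := base_pos hv
  have h3 : (0:ℝ) < 1/a - 1 := by linarith
  exact mul_pos (mul_pos h3 (Real.rpow_pos_of_pos hv _)) (Real.rpow_pos_of_pos h2 _)

lemma hasDerivAt_gA {a v : ℝ} (ha : a ∈ Set.Ioo (0:ℝ) 1) (hv : 0 < v) :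
    HasDerivAt (gA a) (gA1 a v) v := by
  have h1 : HasDerivAt (fun v : ℝ => v ^ (1/a)) ((1/a) * v ^ (1/a - 1)) v :=
    Real.hasDerivAt_rpow_const (Or.inl hv.ne')
  have h2 := (h1.const_add 1).rpow_const (p := a) (Or.inl (base_pos hv).ne')
  have h3 := h2.sub (hasDerivAt_id v)
  refine h3.congr_deriv ?_; symm
  rw [gA1, show (1/a) * v ^ (1/a-1) * a * (1+v^(1/a))^(a-1)
    = (a * (1/a)) * ((1+v^(1/a))^(a-1) * v^(1/a-1)) from by ring,
    mul_one_div_cancel ha.1.ne', one_mul]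

lemma hasDerivAt_gA1 {a v : ℝ} (ha : a ∈ Set.Ioo (0:ℝ) 1) (hv : 0 < v) :
    HasDerivAt (gA1 a) (gA2 a v) v := by
  have hb := base_pos (a := a) hv
  have h1 : HasDerivAt (fun v : ℝ => v ^ (1/a)) ((1/a) * v ^ (1/a - 1)) v :=
    Real.hasDerivAt_rpow_const (Or.inl hv.ne')
  have h2 := (h1.const_add 1).rpow_const (p := a - 1) (Or.inl hb.ne')
  have h3 : HasDerivAt (fun v : ℝ => v ^ (1/a - 1)) ((1/a - 1) * v ^ (1/a - 1 - 1)) v :=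
    Real.hasDerivAt_rpow_const (Or.inl hv.ne')
  have h4 := (h2.mul h3).sub_const 1
  refine h4.congr_deriv ?_; symm
  rw [gA2]
  have e1 : (1 + v ^ (1/a)) ^ (a - 1) = (1 + v ^ (1/a)) ^ (a - 2) * (1 + v ^ (1/a)) := by
    rw [← Real.rpow_add_one hb.ne' (a-2)]; congr 1; ring
  have e2 : v ^ (1/a - 1) = v ^ (1/a - 2) * v := by
    rw [← Real.rpow_add_one hv.ne' (1/a - 2)]; congr 1; ring
  have e3 : v ^ (1/a) = v ^ (1/a - 2) * v * v := by
    have e3' : v ^ (1/a) = v ^ (1/a-2) * v ^ ((2:ℕ):ℝ) := by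
      rw [← Real.rpow_add hv]; congr 1; push_cast; ring
    rw [e3', Real.rpow_natCast]; ring
  have e4 : v ^ (1/a - 1 - 1) = v ^ (1/a - 2) := by congr 1; ring
  rw [e1, e2, e3, e4]
  have ha0 : a ≠ 0 := ha.1.ne'
  field_simp
  ring

lemma key_ineq (p a b a1 b1 a2 b2 : ℝ) (hp : 1 < p) (ha : 0 < a) (hb : 0 < b)
    (ha2 : 0 < a2) (hb2 : 0 < b2) :
    0 < (1 - p) * (a^(p-1)*a1 + b^(p-1)*b1)^2
      + (a^p + b^p) * ((p-1)*(a^(p-2)*a1^2 + b^(p-2)*b1^2) + a^(p-1)*a2 + b^(p-1)*b2) := by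
  have hx1 : a ^ p = (a ^ (p/2))^2 := by
    rw [← Real.rpow_natCast (a ^ (p/2)) 2, ← Real.rpow_mul ha.le]; norm_num
  have hx2 : a ^ (p-2) = (a ^ (p/2 - 1))^2 := by
    rw [← Real.rpow_natCast (a ^ (p/2 - 1)) 2, ← Real.rpow_mul ha.le]; ring_nf
  have hx3 : a ^ (p-1) = a ^ (p/2) * a ^ (p/2 - 1) := by
    rw [← Real.rpow_add ha]; ring_nf
  have hy1 : b ^ p = (b ^ (p/2))^2 := by
    rw [← Real.rpow_natCast (b ^ (p/2)) 2, ← Real.rpow_mul hb.le]; norm_num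
  have hy2 : b ^ (p-2) = (b ^ (p/2 - 1))^2 := by
    rw [← Real.rpow_natCast (b ^ (p/2 - 1)) 2, ← Real.rpow_mul hb.le]; ring_nf
  have hy3 : b ^ (p-1) = b ^ (p/2) * b ^ (p/2 - 1) := by
    rw [← Real.rpow_add hb]; ring_nf
  set x1 := a ^ (p/2) with hx1d
  set x2 := a ^ (p/2 - 1) with hx2d
  set y1 := b ^ (p/2) with hy1d
  set y2 := b ^ (p/2 - 1) with hy2d
  have px1 : 0 < x1 := Real.rpow_pos_of_pos ha _
  have px2 : 0 < x2 := Real.rpow_pos_of_pos ha _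
  have py1 : 0 < y1 := Real.rpow_pos_of_pos hb _
  have py2 : 0 < y2 := Real.rpow_pos_of_pos hb _
  rw [hx1, hx2, hx3, hy1, hy2, hy3]
  have key : (1 - p) * (x1*x2*a1 + y1*y2*b1)^2
      + (x1^2 + y1^2) * ((p-1)*(x2^2*a1^2 + y2^2*b1^2) + x1*x2*a2 + y1*y2*b2)
      = (p-1) * (x1*y2*b1 - y1*x2*a1)^2 + (x1^2+y1^2)*(x1*x2*a2 + y1*y2*b2) := by ring
  rw [key]
  have h1 : 0 ≤ (p-1) * (x1*y2*b1 - y1*x2*a1)^2 :=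
    mul_nonneg (by linarith) (sq_nonneg _)
  have h2 : 0 < (x1^2+y1^2)*(x1*x2*a2 + y1*y2*b2) :=
    mul_pos (by positivity) (by positivity)
  linarith

noncomputable def gS (α β γ v : ℝ) : ℝ := gA α v ^ (1/γ) + gA β v ^ (1/γ)
noncomputable def gT (α β γ v : ℝ) : ℝ :=
  gA α v ^ (1/γ - 1) * gA1 α v + gA β v ^ (1/γ - 1) * gA1 β v
noncomputable def gU (α β γ v : ℝ) : ℝ :=
  (1/γ - 1) * (gA α v ^ (1/γ - 2) * gA1 α v ^ 2 + gA β v ^ (1/γ - 2) * gA1 β v ^ 2)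
  + gA α v ^ (1/γ - 1) * gA2 α v + gA β v ^ (1/γ - 1) * gA2 β v
noncomputable def gH1 (α β γ v : ℝ) : ℝ := 1 + gS α β γ v ^ (γ - 1) * gT α β γ v
noncomputable def gH2 (α β γ v : ℝ) : ℝ :=
  (γ - 1) / γ * gS α β γ v ^ (γ - 2) * gT α β γ v ^ 2 + gS α β γ v ^ (γ - 1) * gU α β γ v

variable {α β γ v : ℝ}

lemma gS_pos (hα : α ∈ Set.Ioo (0:ℝ) 1) (hβ : β ∈ Set.Ioo (0:ℝ) 1) (hv : 0 < v) :
    0 < gS α β γ v :=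
  add_pos (Real.rpow_pos_of_pos (gA_pos hα hv) _) (Real.rpow_pos_of_pos (gA_pos hβ hv) _)

lemma hasDerivAt_gS (hα : α ∈ Set.Ioo (0:ℝ) 1) (hβ : β ∈ Set.Ioo (0:ℝ) 1) (hv : 0 < v) :
    HasDerivAt (gS α β γ) ((1/γ) * gT α β γ v) v := by
  have h1 := ((hasDerivAt_gA hα hv).rpow_const (p := 1/γ) (Or.inl (gA_pos hα hv).ne')).add
    ((hasDerivAt_gA hβ hv).rpow_const (p := 1/γ) (Or.inl (gA_pos hβ hv).ne'))
  refine h1.congr_deriv ?_; symm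
  rw [gT]; ring

lemma hasDerivAt_gT (hα : α ∈ Set.Ioo (0:ℝ) 1) (hβ : β ∈ Set.Ioo (0:ℝ) 1) (hv : 0 < v) :
    HasDerivAt (gT α β γ) (gU α β γ v) v := by
  have h1 := (((hasDerivAt_gA hα hv).rpow_const (p := 1/γ - 1)
      (Or.inl (gA_pos hα hv).ne')).mul (hasDerivAt_gA1 hα hv)).add
    (((hasDerivAt_gA hβ hv).rpow_const (p := 1/γ - 1)
      (Or.inl (gA_pos hβ hv).ne')).mul (hasDerivAt_gA1 hβ hv))
  refine h1.congr_deriv ?_; symm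
  rw [gU]
  have e1 : (1/γ : ℝ) - 1 - 1 = 1/γ - 2 := by ring
  rw [e1]; ring

lemma hasDerivAt_gH1 (hα : α ∈ Set.Ioo (0:ℝ) 1) (hβ : β ∈ Set.Ioo (0:ℝ) 1)
    (hγ0 : γ ≠ 0) (hv : 0 < v) :
    HasDerivAt (gH1 α β γ) (gH2 α β γ v) v := by
  have hS := gS_pos (γ := γ) hα hβ hv
  have h1 := (((hasDerivAt_gS hα hβ hv).rpow_const (p := γ - 1) (Or.inl hS.ne')).mul
    (hasDerivAt_gT (γ := γ) hα hβ hv)).const_add 1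
  refine h1.congr_deriv ?_; symm
  rw [gH2]
  have e1 : (γ : ℝ) - 1 - 1 = γ - 2 := by ring
  rw [e1]
  field_simp

lemma hasDerivAt_h' (hα : α ∈ Set.Ioo (0:ℝ) 1) (hβ : β ∈ Set.Ioo (0:ℝ) 1)
    (hγ0 : γ ≠ 0) (hv : 0 < v) :
    HasDerivAt (fun w => w + gS α β γ w ^ γ) (gH1 α β γ v) v := by
  have hS := gS_pos (γ := γ) hα hβ hv
  have h1 := (hasDerivAt_id v).add
    ((hasDerivAt_gS hα hβ hv).rpow_const (p := γ) (Or.inl hS.ne'))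
  refine h1.congr_deriv ?_; symm
  rw [gH1, show (1/γ) * gT α β γ v * γ * gS α β γ v ^ (γ-1)
    = (γ * (1/γ)) * (gS α β γ v ^ (γ-1) * gT α β γ v) from by ring,
    mul_one_div_cancel hγ0, one_mul]

lemma gH2_pos (hα : α ∈ Set.Ioo (0:ℝ) 1) (hβ : β ∈ Set.Ioo (0:ℝ) 1)
    (hγ : γ ∈ Set.Ioo (0:ℝ) 1) (hv : 0 < v) : 0 < gH2 α β γ v := by
  have hS := gS_pos (γ := γ) hα hβ hv
  have hp : 1 < 1/γ := one_lt_one_div hγ.1 hγ.2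
  have key := key_ineq (1/γ) (gA α v) (gA β v) (gA1 α v) (gA1 β v) (gA2 α v) (gA2 β v)
    hp (gA_pos hα hv) (gA_pos hβ hv) (gA2_pos hα hv) (gA2_pos hβ hv)
  have eS : gS α β γ v ^ (γ - 1) = gS α β γ v ^ (γ - 2) * gS α β γ v := by
    rw [← Real.rpow_add_one hS.ne' (γ-2)]; congr 1; ring
  have hpos : 0 < gS α β γ v ^ (γ - 2) := Real.rpow_pos_of_pos hS _
  rw [gH2, eS]
  have e2 : (γ - 1) / γ * gS α β γ v ^ (γ - 2) * gT α β γ v ^ 2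
      + gS α β γ v ^ (γ - 2) * gS α β γ v * gU α β γ v
      = gS α β γ v ^ (γ - 2) * ((1 - 1/γ) * gT α β γ v ^ 2 + gS α β γ v * gU α β γ v) := by
    have : (γ - 1) / γ = 1 - 1/γ := by rw [sub_div, div_self hγ.1.ne']
    rw [this]; ring
  rw [e2]
  apply mul_pos hpos
  rw [gT, gU, gS]
  convert key using 1

theorem stmt6 (α β γ : ℝ) (hα : α ∈ Set.Ioo (0:ℝ) 1) (hβ : β ∈ Set.Ioo (0:ℝ) 1)
    (hγ : γ ∈ Set.Ioo (0:ℝ) 1)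
    (h : ℝ → ℝ)
    (hh : ∀ v : ℝ, h v =
      v + (((1 + v ^ (1/α)) ^ α - v) ^ (1/γ) + ((1 + v ^ (1/β)) ^ β - v) ^ (1/γ)) ^ γ) :
    StrictConvexOn ℝ (Set.Ioi 0) h ∧ ∀ v : ℝ, 0 < v → 0 < deriv (deriv h) v := by
  have hfun : h = fun w => w + gS α β γ w ^ γ := by
    funext w; rw [hh w]; rfl
  have hγ0 : γ ≠ 0 := hγ.1.ne'
  have hder : ∀ v : ℝ, 0 < v → HasDerivAt h (gH1 α β γ v) v := by
    intro v hv; rw [hfun]; exact hasDerivAt_h' hα hβ hγ0 hv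
  have hderiv1 : ∀ v : ℝ, 0 < v → deriv h v = gH1 α β γ v := fun v hv => (hder v hv).deriv
  have hderiv2 : ∀ v : ℝ, 0 < v → deriv (deriv h) v = gH2 α β γ v := by
    intro v hv
    have hev : deriv h =ᶠ[nhds v] gH1 α β γ := by
      filter_upwards [isOpen_Ioi.mem_nhds (show v ∈ Set.Ioi 0 from hv)] with w hw
      exact hderiv1 w hw
    rw [hev.deriv_eq]
    exact (hasDerivAt_gH1 hα hβ hγ0 hv).deriv
  refine ⟨?_, fun v hv => hderiv2 v hv ▸ gH2_pos hα hβ hγ hv⟩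
  apply strictConvexOn_of_deriv2_pos (convex_Ioi 0)
  · intro v hv
    exact (hder v hv).continuousAt.continuousWithinAt
  · intro v hv
    rw [interior_Ioi] at hv
    have e : deriv^[2] h v = deriv (deriv h) v := rfl
    rw [e, hderiv2 v hv]
    exact gH2_pos hα hβ hγ hv
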